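/- Let K be a number field, let 𝒮 be a finite set of places of K containing all archimedean places, and let O_K(𝒮) be the ring of 𝒮-integers of K. Fix an algebraic closure of K and, for each ν ∈ 𝒮, an extension of the absolute value |·|_ν to this algebraic closure. Let A ∈ SL_n(O_K(𝒮)) and let λ_1, …, λ_r be the distinct eigenvalues of A (in the algebraic closure), with r ≥ 2. Then ∏_{ν∈𝒮} ∏_{i≠j} |λ_i − λ_j|_ν ≥ 1. -/

import Mathlib

open NumberField IsDedekindDomain Finset
open scoped NNReal

/-- The normalized `v`-adic absolute value on a number field `K` attached to a finite place
(nonzero prime ideal) `v`: it sends `x` to `(N v) ^ (-v(x))` where `N v` is the cardinality of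
the residue field at `v`. -/
noncomputable def vadicAbs {K : Type*} [Field K] [NumberField K]
    (v : HeightOneSpectrum (𝓞 K)) (x : K) : ℝ :=
  (WithZeroMulInt.toNNReal
    (Nat.cast_ne_zero.mpr ((Ideal.absNorm_ne_zero_iff v.asIdeal).mpr
      (Ideal.finiteQuotientOfFreeOfNeBot v.asIdeal v.ne_bot)) :
        ((Ideal.absNorm v.asIdeal : ℕ) : ℝ≥0) ≠ 0)
    (v.valuation K x) : ℝ≥0)

section Aux

set_option linter.unusedSectionVars false

open Polynomial WithZero Multiplicative
open scoped Classical

theorem aux_mem_range {K : Type*} [Field K] [CharZero K] {x : AlgebraicClosure K}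
    (hfix : ∀ σ : AlgebraicClosure K ≃ₐ[K] AlgebraicClosure K, σ x = x) :
    x ∈ (algebraMap K (AlgebraicClosure K)).range := by
  classical
  have hint : IsIntegral K x := Algebra.IsIntegral.isIntegral x
  have hsep : (minpoly K x).Separable := (minpoly.irreducible hint).separable
  have hsplit : Splits ((minpoly K x).map (algebraMap K (AlgebraicClosure K))) :=
    IsAlgClosed.splits _
  have hcard : (minpoly K x).natDegree
      = Multiset.card ((minpoly K x).map (algebraMap K (AlgebraicClosure K))).roots :=
    (natDegree_map (algebraMap K (AlgebraicClosure K))).symm.trans hsplit.natDegree_eq_card_roots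
  have hnodup : ((minpoly K x).map (algebraMap K (AlgebraicClosure K))).roots.Nodup :=
    Polynomial.nodup_roots (hsep.map)
  have hall : ∀ y ∈ ((minpoly K x).map (algebraMap K (AlgebraicClosure K))).roots, y = x := by
    intro y hy
    have hconj : IsConjRoot K x y := by
      rw [isConjRoot_iff_mem_minpoly_aroots hint]
      exact hy
    obtain ⟨σ, hσ⟩ := hconj.exists_algEquiv
    exact σ.injective (by rw [hσ, hfix σ])
  have hcount : ((minpoly K x).map (algebraMap K (AlgebraicClosure K))).roots.count x
      = Multiset.card ((minpoly K x).map (algebraMap K (AlgebraicClosure K))).roots :=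
    Multiset.count_eq_card.mpr (fun y hy => (hall y hy).symm)
  have hle : Multiset.card ((minpoly K x).map (algebraMap K (AlgebraicClosure K))).roots ≤ 1 := by
    rw [← hcount]
    exact Multiset.nodup_iff_count_le_one.mp hnodup x
  have h1 : (minpoly K x).natDegree = 1 :=
    le_antisymm (hcard ▸ hle) (minpoly.natDegree_pos hint)
  exact (minpoly.natDegree_eq_one_iff).mp h1


namespace EigenvalueDiffAux

variable {K : Type*} [Field K] [NumberField K]

theorem absNorm_ne_zero' (v : HeightOneSpectrum (𝓞 K)) : (Ideal.absNorm v.asIdeal) ≠ 0 :=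
  (Ideal.absNorm_ne_zero_iff v.asIdeal).mpr
      (Ideal.finiteQuotientOfFreeOfNeBot v.asIdeal v.ne_bot)

theorem vadicAbs_int_apply (v : HeightOneSpectrum (𝓞 K)) {a : 𝓞 K} (ha : a ≠ 0) :
    vadicAbs v (algebraMap (𝓞 K) K a)
      = (Ideal.absNorm v.asIdeal : ℝ) ^
        (-((Associates.mk v.asIdeal).count (Associates.mk (Ideal.span {a})).factors : ℤ)) := by
  unfold vadicAbs
  rw [IsDedekindDomain.HeightOneSpectrum.valuation_of_algebraMap]
  have h1 : v.intValuation a = ((Multiplicative.ofAdd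
      (-((Associates.mk v.asIdeal).count (Associates.mk (Ideal.span {a})).factors : ℤ))
      : Multiplicative ℤ) : WithZero (Multiplicative ℤ)) := v.intValuation_if_neg ha
  rw [h1, WithZeroMulInt.toNNReal_neg_apply _ WithZero.coe_ne_zero]
  push_cast
  rw [unzero_coe, toAdd_ofAdd]

theorem fin_prod_formula {a : 𝓞 K} (ha : a ≠ 0) (T : Finset (HeightOneSpectrum (𝓞 K)))
    (hT : ∀ v : HeightOneSpectrum (𝓞 K), v.asIdeal ∣ Ideal.span {a} → v ∈ T) :
    (Ideal.absNorm (Ideal.span {a}) : ℝ) * ∏ v ∈ T, vadicAbs v (algebraMap (𝓞 K) K a) = 1 := by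
  have hspan : Ideal.span {a} ≠ (0 : Ideal (𝓞 K)) := by
    simpa [Ideal.span_singleton_eq_bot] using ha
  have hfact : Ideal.span {a}
      = ∏ v ∈ T, v.maxPowDividing (Ideal.span {a}) := by
    conv_lhs => rw [← Ideal.finprod_heightOneSpectrum_factorization hspan]
    refine (finprod_eq_finset_prod_of_mulSupport_subset
      (fun v : HeightOneSpectrum (𝓞 K) => v.maxPowDividing (Ideal.span {a})) ?_)
    intro v hv
    by_contra hvT
    apply hv
    have hdvd : ¬ v.asIdeal ∣ Ideal.span {a} := fun h => hvT (hT v h)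
    have h0 : (Associates.mk v.asIdeal).count (Associates.mk (Ideal.span {a})).factors = 0 := by
      by_contra hev
      exact hdvd ((Associates.count_ne_zero_iff_dvd hspan v.irreducible).mp hev)
    simp only [IsDedekindDomain.HeightOneSpectrum.maxPowDividing, h0, pow_zero]
  have hnorm : (Ideal.absNorm (Ideal.span {a}) : ℝ) = ∏ v ∈ T, (Ideal.absNorm v.asIdeal : ℝ)
      ^ ((Associates.mk v.asIdeal).count (Associates.mk (Ideal.span {a})).factors) := by
    have h2 : Ideal.absNorm (Ideal.span {a}) = ∏ v ∈ T, Ideal.absNorm v.asIdeal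
        ^ ((Associates.mk v.asIdeal).count (Associates.mk (Ideal.span {a})).factors) := by
      conv_lhs => rw [hfact]
      rw [map_prod]
      exact Finset.prod_congr rfl fun v _ => by
        simp [IsDedekindDomain.HeightOneSpectrum.maxPowDividing, map_pow]
    rw [h2]
    push_cast
    rfl
  rw [hnorm, ← Finset.prod_mul_distrib]
  refine Finset.prod_eq_one (fun v _ => ?_)
  rw [vadicAbs_int_apply v ha]
  have hN : ((Ideal.absNorm v.asIdeal : ℝ)) ≠ 0 := Nat.cast_ne_zero.mpr (absNorm_ne_zero' v)
  rw [← zpow_natCast ((Ideal.absNorm v.asIdeal : ℝ))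
    ((Associates.mk v.asIdeal).count (Associates.mk (Ideal.span {a})).factors), ← zpow_add₀ hN]
  simp

theorem one_lt_N (v : HeightOneSpectrum (𝓞 K)) : 1 < ((Ideal.absNorm v.asIdeal : ℕ) : ℝ≥0) := by
  have h0 := absNorm_ne_zero' v
  have h1 : Ideal.absNorm v.asIdeal ≠ 1 := by
    rw [Ne, Ideal.absNorm_eq_one_iff]
    exact v.isPrime.ne_top
  have : 2 ≤ Ideal.absNorm v.asIdeal := by omega
  exact_mod_cast Nat.lt_of_lt_of_le Nat.one_lt_two this

theorem vadicAbs_nonneg (v : HeightOneSpectrum (𝓞 K)) (x : K) : 0 ≤ vadicAbs v x :=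
  (WithZeroMulInt.toNNReal _ (v.valuation K x)).2

theorem vadicAbs_pos (v : HeightOneSpectrum (𝓞 K)) {x : K} (hx : x ≠ 0) : 0 < vadicAbs v x := by
  have := WithZeroMulInt.toNNReal_pos
    (m := v.valuation K x)
    (Nat.cast_ne_zero.mpr (absNorm_ne_zero' v) : ((Ideal.absNorm v.asIdeal : ℕ) : ℝ≥0) ≠ 0)
    ((Valuation.ne_zero_iff _).mpr hx)
  exact_mod_cast this

theorem vadicAbs_le_one (v : HeightOneSpectrum (𝓞 K)) {x : K} (hx : v.valuation K x ≤ 1) :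
    vadicAbs v x ≤ 1 := by
  have := (WithZeroMulInt.toNNReal_le_one_iff (m := v.valuation K x) (one_lt_N v)).mpr hx
  exact_mod_cast this

theorem vadicAbs_div (v : HeightOneSpectrum (𝓞 K)) (x y : K) :
    vadicAbs v (x / y) = vadicAbs v x / vadicAbs v y := by
  unfold vadicAbs
  rw [map_div₀, map_div₀]
  exact_mod_cast rfl

theorem norm_ineq {d : K} (hd : d ≠ 0) (Sf : Finset (HeightOneSpectrum (𝓞 K)))
    (hval : ∀ v : HeightOneSpectrum (𝓞 K), v ∉ Sf → v.valuation K d ≤ 1) :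
    1 ≤ (|Algebra.norm ℚ d| : ℝ) * ∏ v ∈ Sf, vadicAbs v d := by
  obtain ⟨a, b, hb, rfl⟩ := IsFractionRing.div_surjective (A := 𝓞 K) d
  have hb0 : b ≠ 0 := nonZeroDivisors.ne_zero hb
  have hbK : (algebraMap (𝓞 K) K b) ≠ 0 := by simpa using hb0
  have ha0 : a ≠ 0 := by
    rintro rfl
    simp at hd
  have haK : (algebraMap (𝓞 K) K a) ≠ 0 := by simpa using ha0
  have hspa : Ideal.span {a} ≠ (0 : Ideal (𝓞 K)) := by
    simpa [Ideal.span_singleton_eq_bot] using ha0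
  have hspb : Ideal.span {b} ≠ (0 : Ideal (𝓞 K)) := by
    simpa [Ideal.span_singleton_eq_bot] using hb0
  classical
  set T : Finset (HeightOneSpectrum (𝓞 K)) :=
    Sf ∪ (Ideal.finite_factors hspa).toFinset ∪ (Ideal.finite_factors hspb).toFinset with hT
  have hTa : ∀ v : HeightOneSpectrum (𝓞 K), v.asIdeal ∣ Ideal.span {a} → v ∈ T := by
    intro v hv
    simp only [hT, Finset.mem_union, Set.Finite.mem_toFinset, Set.mem_setOf_eq]
    exact Or.inl (Or.inr hv)
  have hTb : ∀ v : HeightOneSpectrum (𝓞 K), v.asIdeal ∣ Ideal.span {b} → v ∈ T := by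
    intro v hv
    simp only [hT, Finset.mem_union, Set.Finite.mem_toFinset, Set.mem_setOf_eq]
    exact Or.inr hv
  have hSfT : Sf ⊆ T := by
    intro v hv
    simp only [hT, Finset.mem_union]
    exact Or.inl (Or.inl hv)
  have hfa := fin_prod_formula ha0 T hTa
  have hfb := fin_prod_formula hb0 T hTb
  have hnb0 : Algebra.norm ℚ (algebraMap (𝓞 K) K b) ≠ 0 :=
    (Algebra.norm_ne_zero_iff).mpr hbK
  -- norm of d
  have hmul : Algebra.norm ℚ (algebraMap (𝓞 K) K a)
      = Algebra.norm ℚ (algebraMap (𝓞 K) K a / algebraMap (𝓞 K) K b)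
        * Algebra.norm ℚ (algebraMap (𝓞 K) K b) := by
    rw [← map_mul]
    congr 1
    field_simp
  have hna : (|Algebra.norm ℚ (algebraMap (𝓞 K) K a)| : ℝ)
      = (Ideal.absNorm (Ideal.span {a}) : ℝ) := by
    rw [Ideal.absNorm_span_singleton, ← Algebra.coe_norm_int]
    push_cast [Nat.cast_natAbs]
    norm_cast
  have hnb : (|Algebra.norm ℚ (algebraMap (𝓞 K) K b)| : ℝ)
      = (Ideal.absNorm (Ideal.span {b}) : ℝ) := by
    rw [Ideal.absNorm_span_singleton, ← Algebra.coe_norm_int]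
    push_cast [Nat.cast_natAbs]
    norm_cast
  have hNd : (|Algebra.norm ℚ (algebraMap (𝓞 K) K a / algebraMap (𝓞 K) K b)| : ℝ)
      = (Ideal.absNorm (Ideal.span {a}) : ℝ) / (Ideal.absNorm (Ideal.span {b}) : ℝ) := by
    rw [← hna, ← hnb, hmul]
    push_cast [abs_mul]
    rw [mul_div_assoc, div_self (by exact_mod_cast (abs_ne_zero).mpr hnb0), mul_one]
  have hprodd : ∀ v : HeightOneSpectrum (𝓞 K),
      vadicAbs v (algebraMap (𝓞 K) K a / algebraMap (𝓞 K) K b)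
        = vadicAbs v (algebraMap (𝓞 K) K a) / vadicAbs v (algebraMap (𝓞 K) K b) :=
    fun v => vadicAbs_div v _ _
  have hfb_pos : ∀ v : HeightOneSpectrum (𝓞 K), 0 < vadicAbs v (algebraMap (𝓞 K) K b) :=
    fun v => vadicAbs_pos v hbK
  have hfa_pos : ∀ v : HeightOneSpectrum (𝓞 K), 0 < vadicAbs v (algebraMap (𝓞 K) K a) :=
    fun v => vadicAbs_pos v haK
  have hTform : (|Algebra.norm ℚ (algebraMap (𝓞 K) K a / algebraMap (𝓞 K) K b)| : ℝ)
      * ∏ v ∈ T, vadicAbs v (algebraMap (𝓞 K) K a / algebraMap (𝓞 K) K b) = 1 := by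
    rw [hNd]
    calc (Ideal.absNorm (Ideal.span {a}) : ℝ) / (Ideal.absNorm (Ideal.span {b}) : ℝ)
        * ∏ v ∈ T, vadicAbs v (algebraMap (𝓞 K) K a / algebraMap (𝓞 K) K b)
        = ((Ideal.absNorm (Ideal.span {a}) : ℝ) * ∏ v ∈ T, vadicAbs v (algebraMap (𝓞 K) K a))
          / ((Ideal.absNorm (Ideal.span {b}) : ℝ)
            * ∏ v ∈ T, vadicAbs v (algebraMap (𝓞 K) K b)) := by
          rw [Finset.prod_congr rfl (fun v _ => hprodd v), Finset.prod_div_distrib]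
          rw [div_mul_div_comm]
      _ = 1 := by rw [hfa, hfb]; norm_num
  -- split T into Sf and the rest
  rw [← Finset.prod_sdiff hSfT] at hTform
  have hY1 : ∏ v ∈ T \ Sf, vadicAbs v (algebraMap (𝓞 K) K a / algebraMap (𝓞 K) K b) ≤ 1 := by
    refine Finset.prod_le_one (fun v _ => vadicAbs_nonneg v _) (fun v hv => ?_)
    exact vadicAbs_le_one v (hval v (Finset.mem_sdiff.mp hv).2)
  have hXnn : 0 ≤ (|Algebra.norm ℚ (algebraMap (𝓞 K) K a / algebraMap (𝓞 K) K b)| : ℝ)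
      * ∏ v ∈ Sf, vadicAbs v (algebraMap (𝓞 K) K a / algebraMap (𝓞 K) K b) := by
    apply mul_nonneg
    · exact_mod_cast abs_nonneg _
    · exact Finset.prod_nonneg (fun v _ => vadicAbs_nonneg v _)
  calc (1 : ℝ) = (|Algebra.norm ℚ (algebraMap (𝓞 K) K a / algebraMap (𝓞 K) K b)| : ℝ)
        * ((∏ v ∈ T \ Sf, vadicAbs v (algebraMap (𝓞 K) K a / algebraMap (𝓞 K) K b))
          * ∏ v ∈ Sf, vadicAbs v (algebraMap (𝓞 K) K a / algebraMap (𝓞 K) K b)) := hTform.symm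
    _ = ((|Algebra.norm ℚ (algebraMap (𝓞 K) K a / algebraMap (𝓞 K) K b)| : ℝ)
          * ∏ v ∈ Sf, vadicAbs v (algebraMap (𝓞 K) K a / algebraMap (𝓞 K) K b))
        * ∏ v ∈ T \ Sf, vadicAbs v (algebraMap (𝓞 K) K a / algebraMap (𝓞 K) K b) := by ring
    _ ≤ ((|Algebra.norm ℚ (algebraMap (𝓞 K) K a / algebraMap (𝓞 K) K b)| : ℝ)
          * ∏ v ∈ Sf, vadicAbs v (algebraMap (𝓞 K) K a / algebraMap (𝓞 K) K b)) * 1 :=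
        mul_le_mul_of_nonneg_left hY1 hXnn
    _ = _ := mul_one _


variable {n : ℕ}

theorem invariance_and_descent
    (A : Matrix.SpecialLinearGroup (Fin n) K)
    {r : ℕ} (lam : Fin r → AlgebraicClosure K) (hinj : Function.Injective lam)
    (hroots : ∀ μ : AlgebraicClosure K, (∃ i, lam i = μ) ↔
      (((A : Matrix (Fin n) (Fin n) K).map
        (algebraMap K (AlgebraicClosure K))).charpoly).IsRoot μ) :
    ∀ σ : AlgebraicClosure K ≃ₐ[K] AlgebraicClosure K,
      σ (∏ p ∈ (univ : Finset (Fin r)).offDiag, (lam p.1 - lam p.2))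
        = ∏ p ∈ (univ : Finset (Fin r)).offDiag, (lam p.1 - lam p.2) := by
  intro σ
  have hroot : ∀ i, (((A : Matrix (Fin n) (Fin n) K).map
      (algebraMap K (AlgebraicClosure K))).charpoly).IsRoot (σ (lam i)) := by
    intro i
    have h1 := (hroots (lam i)).mp ⟨i, rfl⟩
    rw [Matrix.charpoly_map, IsRoot, eval_map, ← aeval_def] at h1 ⊢
    rw [aeval_algHom_apply σ (lam i)
      (Matrix.charpoly (A : Matrix (Fin n) (Fin n) K)), h1, map_zero]
  choose τ hτ using fun i => (hroots (σ (lam i))).mpr (hroot i)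
  have hτinj : Function.Injective τ := fun i j hij =>
    hinj (σ.injective (by rw [← hτ i, ← hτ j, hij]))
  have hτbij := Finite.injective_iff_bijective.mp hτinj
  let e : Fin r ≃ Fin r := Equiv.ofBijective τ hτbij
  calc σ (∏ p ∈ (univ : Finset (Fin r)).offDiag, (lam p.1 - lam p.2))
      = ∏ p ∈ (univ : Finset (Fin r)).offDiag, (lam (τ p.1) - lam (τ p.2)) := by
        rw [map_prod]
        exact Finset.prod_congr rfl fun p _ => by rw [map_sub, hτ, hτ]
    _ = ∏ p ∈ (univ : Finset (Fin r)).offDiag, (lam p.1 - lam p.2) := by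
        refine Finset.prod_equiv (e.prodCongr e) ?_ ?_
        · intro p
          simp only [Finset.mem_offDiag, Equiv.prodCongr_apply, Prod.map]
          constructor
          · rintro ⟨-, -, hne⟩
            exact ⟨Finset.mem_univ _, Finset.mem_univ _, fun h => hne (e.injective h)⟩
          · rintro ⟨-, -, hne⟩
            exact ⟨Finset.mem_univ _, Finset.mem_univ _, fun h => hne (congrArg e h)⟩
        · intro p _
          rfl

theorem valuation_le_one_of_integral
    (Sf : Finset (HeightOneSpectrum (𝓞 K)))
    (A : Matrix.SpecialLinearGroup (Fin n) K)
    (hA : ∀ i j : Fin n, ∀ v : HeightOneSpectrum (𝓞 K), v ∉ Sf →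
      v.valuation K ((A : Matrix (Fin n) (Fin n) K) i j) ≤ 1)
    {r : ℕ} (lam : Fin r → AlgebraicClosure K)
    (hroots : ∀ μ : AlgebraicClosure K, (∃ i, lam i = μ) ↔
      (((A : Matrix (Fin n) (Fin n) K).map
        (algebraMap K (AlgebraicClosure K))).charpoly).IsRoot μ)
    {d : K}
    (hdφ : algebraMap K (AlgebraicClosure K) d
      = ∏ p ∈ (univ : Finset (Fin r)).offDiag, (lam p.1 - lam p.2))
    (v : HeightOneSpectrum (𝓞 K)) (hv : v ∉ Sf) :
    v.valuation K d ≤ 1 := by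
  set Ov := (v.valuation (K := K)).integer with hOvdef
  set A' : Matrix (Fin n) (Fin n) Ov :=
    Matrix.of (fun i j => (⟨(A : Matrix (Fin n) (Fin n) K) i j, hA i j v hv⟩ : Ov)) with hA'
  have hmap : A'.map (algebraMap Ov K) = (A : Matrix (Fin n) (Fin n) K) := by
    ext i j
    rfl
  have hcharmap : (A'.charpoly).map (algebraMap Ov K)
      = Matrix.charpoly (A : Matrix (Fin n) (Fin n) K) := by
    rw [← Matrix.charpoly_map, hmap]
  have hint : ∀ i, IsIntegral Ov (lam i) := by
    intro i
    refine ⟨A'.charpoly, A'.charpoly_monic, ?_⟩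
    have h1 := (hroots (lam i)).mp ⟨i, rfl⟩
    rw [Matrix.charpoly_map] at h1
    have h2 : (algebraMap Ov (AlgebraicClosure K))
        = (algebraMap K (AlgebraicClosure K)).comp (algebraMap Ov K) :=
      IsScalarTower.algebraMap_eq Ov K (AlgebraicClosure K)
    rw [eval₂_eq_eval_map, h2, ← Polynomial.map_map, hcharmap]
    exact h1
  have hDint : IsIntegral Ov (algebraMap K (AlgebraicClosure K) d) := by
    rw [hdφ]
    have : (∏ p ∈ (univ : Finset (Fin r)).offDiag, (lam p.1 - lam p.2))
        ∈ integralClosure Ov (AlgebraicClosure K) :=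
      Subalgebra.prod_mem _ (fun p _ => sub_mem (hint p.1) (hint p.2))
    exact this
  have hdint : IsIntegral Ov d :=
    (isIntegral_algebraMap_iff (algebraMap K (AlgebraicClosure K)).injective).mp hDint
  exact (Valuation.integer.integers (v := v.valuation (K := K))).mem_of_integral hdint


end EigenvalueDiffAux

end Aux

/-- **Product of eigenvalue differences of an `𝒮`-integral matrix.**
Let `K` be a number field and let `𝒮` be a finite set of places of `K` containing all the
archimedean ones, so that `𝒮` consists of all the infinite places together with a finite set
`Sf` of finite places.  For each place of `𝒮` fix an extension to the algebraic closure `L` of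
`K` of the associated (suitably normalized) absolute value: for an infinite place `w` the
normalized value of `x` is `w(x) ^ mult w`, extended by `(Winf w) ^ mult w`, and for a finite
place `v ∈ Sf` the normalized value is `vadicAbs v`, extended by `Wfin v`.
If `A ∈ SL_n(O_K(𝒮))` has distinct eigenvalues `λ_1, …, λ_r` in `L` with `r ≥ 2`, then
`∏_{ν ∈ 𝒮} ∏_{i ≠ j} |λ_i − λ_j|_ν ≥ 1`. -/
theorem one_le_prod_places_prod_eigenvalue_differences
    {K : Type*} [Field K] [NumberField K] {n : ℕ}
    (Sf : Finset (HeightOneSpectrum (𝓞 K)))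
    (Winf : InfinitePlace K → AbsoluteValue (AlgebraicClosure K) ℝ)
    (hWinf : ∀ (w : InfinitePlace K) (x : K), Winf w (algebraMap K (AlgebraicClosure K) x) = w x)
    (Wfin : HeightOneSpectrum (𝓞 K) → AbsoluteValue (AlgebraicClosure K) ℝ)
    (hWfin : ∀ v ∈ Sf, ∀ x : K,
      Wfin v (algebraMap K (AlgebraicClosure K) x) = vadicAbs v x)
    (A : Matrix.SpecialLinearGroup (Fin n) K)
    (hA : ∀ i j : Fin n, ∀ v : HeightOneSpectrum (𝓞 K), v ∉ Sf →
      v.valuation K ((A : Matrix (Fin n) (Fin n) K) i j) ≤ 1)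
    {r : ℕ} (hr : 2 ≤ r) (lam : Fin r → AlgebraicClosure K) (hinj : Function.Injective lam)
    (hroots : ∀ μ : AlgebraicClosure K, (∃ i, lam i = μ) ↔
      (((A : Matrix (Fin n) (Fin n) K).map
        (algebraMap K (AlgebraicClosure K))).charpoly).IsRoot μ) :
    1 ≤ (∏ w : InfinitePlace K,
          ∏ p ∈ (univ : Finset (Fin r)).offDiag, (Winf w (lam p.1 - lam p.2)) ^ w.mult) *
        ∏ v ∈ Sf,
          ∏ p ∈ (univ : Finset (Fin r)).offDiag, Wfin v (lam p.1 - lam p.2) := by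
  have hfix := EigenvalueDiffAux.invariance_and_descent A lam hinj hroots
  obtain ⟨d, hdφ⟩ := aux_mem_range hfix
  have hD0 : (∏ p ∈ (univ : Finset (Fin r)).offDiag, (lam p.1 - lam p.2)) ≠ 0 :=
    Finset.prod_ne_zero_iff.mpr fun p hp =>
      sub_ne_zero.mpr (fun h => (Finset.mem_offDiag.mp hp).2.2 (hinj h))
  have hd0 : d ≠ 0 := fun h => hD0 (by rw [← hdφ, h, map_zero])
  have hval : ∀ v : HeightOneSpectrum (𝓞 K), v ∉ Sf → v.valuation K d ≤ 1 :=
    fun v hv => EigenvalueDiffAux.valuation_le_one_of_integral Sf A hA lam hroots hdφ v hv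
  have h1 : ∀ w : InfinitePlace K,
      ∏ p ∈ (univ : Finset (Fin r)).offDiag, (Winf w (lam p.1 - lam p.2)) ^ w.mult
        = (w d) ^ w.mult := by
    intro w
    rw [Finset.prod_pow]
    congr 1
    rw [← map_prod (Winf w), ← hdφ, hWinf]
  have h2 : ∀ v ∈ Sf,
      ∏ p ∈ (univ : Finset (Fin r)).offDiag, Wfin v (lam p.1 - lam p.2) = vadicAbs v d := by
    intro v hv
    rw [← map_prod (Wfin v), ← hdφ, hWfin v hv]
  rw [Finset.prod_congr rfl (fun w _ => h1 w), Finset.prod_congr rfl h2,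
    NumberField.InfinitePlace.prod_eq_abs_norm d, Rat.cast_abs]
  exact EigenvalueDiffAux.norm_ineq hd0 Sf hval
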